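/- Every connected graph on at least 2 vertices that contains no path on 4 vertices as a subgraph is either a triangle K₃ or a star K_{1,m} for some m ≥ 1. -/

import Mathlib

/-- `H` is contained in `G` as a (not necessarily induced) subgraph:
there is an injective map of vertices carrying edges of `H` to edges of `G`. -/
def Contains {α β : Type*} (H : SimpleGraph α) (G : SimpleGraph β) : Prop :=
  ∃ f : α → β, Function.Injective f ∧ ∀ ⦃a b⦄, H.Adj a b → G.Adj (f a) (f b)

/-- The suspension `P̂₄` of the path on 4 vertices: a new apex vertex `none`
is joined to all four vertices of `P₄`. -/
def hatP4 : SimpleGraph (Option (Fin 4)) :=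
  SimpleGraph.fromRel (fun a b =>
    (∃ i j, a = some i ∧ b = some j ∧ (SimpleGraph.pathGraph 4).Adj i j) ∨ a = none)

/-- The number of triangles (3-cliques) of a graph. -/
noncomputable def triangleCount {V : Type*} (G : SimpleGraph V) : ℕ :=
  (G.cliqueSet 3).ncard

lemma contains_path4 {V : Type} (G : SimpleGraph V) {x0 x1 x2 x3 : V}
    (h01 : G.Adj x0 x1) (h12 : G.Adj x1 x2) (h23 : G.Adj x2 x3)
    (d02 : x0 ≠ x2) (d03 : x0 ≠ x3) (d13 : x1 ≠ x3) :
    Contains (SimpleGraph.pathGraph 4) G := by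
  have d01 := h01.ne
  have d12 := h12.ne
  have d23 := h23.ne
  refine ⟨![x0, x1, x2, x3], ?_, ?_⟩
  · intro i j hij
    fin_cases i <;> fin_cases j <;> simp_all
  · intro a b hab
    rw [SimpleGraph.pathGraph_adj] at hab
    fin_cases a <;> fin_cases b <;> simp_all <;>
      first
        | exact h01 | exact h01.symm | exact h12 | exact h12.symm
        | exact h23 | exact h23.symm

lemma exists_boundary {V : Type} {G : SimpleGraph V} {S : Set V} :
    ∀ {u v : V}, G.Walk u v → u ∉ S → v ∈ S → ∃ x y, x ∉ S ∧ y ∈ S ∧ G.Adj x y := by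
  intro u v p
  induction p with
  | nil => intro h h'; exact absurd h' h
  | @cons u w v h p ih =>
    intro hu hv
    by_cases hw : w ∈ S
    · exact ⟨u, w, hu, hw, h⟩
    · exact ih hw hv

/-- Every connected graph on at least two vertices containing no `P₄` as a subgraph
is (isomorphic to) a triangle `K₃` or a star `K_{1,m}` for some `m ≥ 1`. -/
theorem stmt_12 {V : Type} [Fintype V] (G : SimpleGraph V)
    (hconn : G.Connected) (hcard : 2 ≤ Fintype.card V)
    (hfree : ¬ Contains (SimpleGraph.pathGraph 4) G) :
    Nonempty (G ≃g (⊤ : SimpleGraph (Fin 3))) ∨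
      ∃ m : ℕ, 1 ≤ m ∧ Nonempty (G ≃g completeBipartiteGraph (Fin 1) (Fin m)) := by
  classical
  by_cases htri : ∃ a b c : V, G.Adj a b ∧ G.Adj b c ∧ G.Adj a c
  · -- triangle case
    left
    obtain ⟨a, b, c, hab, hbc, hac⟩ := htri
    have hall : ∀ v : V, v = a ∨ v = b ∨ v = c := by
      intro v
      by_contra hv
      push_neg at hv
      obtain ⟨hva, hvb, hvc⟩ := hv
      have hvS : v ∉ ({a, b, c} : Set V) := by simp [hva, hvb, hvc]
      obtain ⟨p⟩ := hconn.preconnected v a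
      obtain ⟨x, y, hx, hy, hxy⟩ := exists_boundary p hvS (by simp)
      have hxa : x ≠ a := fun h => hx (by simp [h])
      have hxb : x ≠ b := fun h => hx (by simp [h])
      have hxc : x ≠ c := fun h => hx (by simp [h])
      rcases hy with hy | hy | hy
      · subst hy
        exact hfree (contains_path4 G hxy hab hbc hxb hxc hac.ne)
      · subst hy
        exact hfree (contains_path4 G hxy hab.symm hac hxa hxc hbc.ne)
      · subst hy
        exact hfree (contains_path4 G hxy hbc.symm hab.symm hxb hxa (Ne.symm hac.ne))
    have hadj : ∀ u v : V, u ≠ v → G.Adj u v := by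
      intro u v huv
      rcases hall u with hu | hu | hu <;> rcases hall v with hv | hv | hv <;>
        subst hu <;> subst hv <;> first
          | exact absurd rfl huv
          | exact hab | exact hab.symm | exact hbc | exact hbc.symm
          | exact hac | exact hac.symm
    have hcard3 : Fintype.card V = 3 := by
      have hsub : (Finset.univ : Finset V) ⊆ {a, b, c} := by
        intro v _
        rcases hall v with h | h | h <;> simp [h]
      have hle := Finset.card_le_card hsub
      have h1 : ({a, b, c} : Finset V).card ≤ ({b, c} : Finset V).card + 1 :=
        Finset.card_insert_le _ _
      have h2 : ({b, c} : Finset V).card ≤ ({c} : Finset V).card + 1 :=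
        Finset.card_insert_le _ _
      have h3 : ({c} : Finset V).card = 1 := Finset.card_singleton c
      have hmem : ({a, b, c} : Finset V).card = 3 := by
        rw [Finset.card_insert_of_notMem, Finset.card_insert_of_notMem,
          Finset.card_singleton]
        · simp [hbc.ne]
        · simp [hab.ne, hac.ne]
      have hge := Finset.card_le_card (Finset.subset_univ ({a, b, c} : Finset V))
      rw [Finset.card_univ] at hle hge
      omega
    let e : V ≃ Fin 3 := Fintype.equivFinOfCardEq hcard3
    exact ⟨⟨e, by
      intro u v
      simp only [SimpleGraph.top_adj, ne_eq, EmbeddingLike.apply_eq_iff_eq]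
      exact ⟨hadj u v, fun h => h.ne⟩⟩⟩
  · -- star case
    right
    push_neg at htri
    -- find an edge
    obtain ⟨u₀, v₀, huv₀⟩ := Fintype.exists_pair_of_one_lt_card (α := V) (by omega)
    obtain ⟨p₀⟩ := hconn.preconnected u₀ v₀
    have hedge : ∃ a b : V, G.Adj a b := by
      cases p₀ with
      | nil => exact absurd rfl huv₀
      | cons h _ => exact ⟨_, _, h⟩
    obtain ⟨a, b, hab⟩ := hedge
    -- everything is a, b, or adjacent to a or b
    have hnear : ∀ v : V, v = a ∨ v = b ∨ G.Adj a v ∨ G.Adj b v := by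
      intro v
      by_contra hv
      push_neg at hv
      obtain ⟨hva, hvb, hvA, hvB⟩ := hv
      set S : Set V := {w | w = a ∨ w = b ∨ G.Adj a w ∨ G.Adj b w} with hS
      have hvS : v ∉ S := by
        intro h
        rcases h with h | h | h | h
        exacts [hva h, hvb h, hvA h, hvB h]
      obtain ⟨p⟩ := hconn.preconnected v a
      obtain ⟨x, y, hx, hy, hxy⟩ := exists_boundary p hvS (Or.inl rfl)
      have hxa : x ≠ a := fun h => hx (Or.inl h)
      have hxb : x ≠ b := fun h => hx (Or.inr (Or.inl h))
      have hxA : ¬ G.Adj a x := fun h => hx (Or.inr (Or.inr (Or.inl h)))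
      have hxB : ¬ G.Adj b x := fun h => hx (Or.inr (Or.inr (Or.inr h)))
      by_cases hya : y = a
      · subst hya; exact hxA hxy.symm
      · by_cases hyb : y = b
        · subst hyb; exact hxB hxy.symm
        · rcases hy with h | h | h | h
          · exact hya h
          · exact hyb h
          · -- Adj a y, path x-y-a-b
            exact hfree (contains_path4 G hxy h.symm hab hxa hxb hyb)
          · -- Adj b y, path x-y-b-a
            exact hfree (contains_path4 G hxy h.symm hab.symm hxb hxa hya)
    -- center exists
    · have hcenter : (∀ v : V, v ≠ a → G.Adj a v) ∨ (∀ v : V, v ≠ b → G.Adj b v) := by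
        by_contra hcon
        push_neg at hcon
        obtain ⟨⟨x, hxa, hxA⟩, ⟨y, hyb, hyB⟩⟩ := hcon
        have hx' : G.Adj b x := by
          rcases hnear x with h | h | h | h
          · exact absurd h hxa
          · subst h; exact absurd hab hxA  -- x = b : ¬Adj a b contra? hxA : ¬ G.Adj a x = ¬Adj a b
          · exact absurd h hxA
          · exact h
        have hy' : G.Adj a y := by
          rcases hnear y with h | h | h | h
          · subst h; exact absurd hab.symm hyB
          · exact absurd h hyb
          · exact h
          · exact absurd h hyB
        have hxy : x ≠ y := fun h => hxA (h ▸ hy')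
        -- path x-b-a-y
        exact hfree (contains_path4 G hx'.symm hab.symm hy' hxa hxy (Ne.symm hyb))
      -- WLOG via helper
      have key : ∃ c : V, ∀ u v : V, G.Adj u v ↔ (u = c ∧ v ≠ c) ∨ (v = c ∧ u ≠ c) := by
        obtain hc | hc := hcenter
        · refine ⟨a, fun u v => ⟨fun h => ?_, fun h => ?_⟩⟩
          · by_cases hu : u = a
            · exact Or.inl ⟨hu, fun hv => h.ne (hu.trans hv.symm)⟩
            · by_cases hv : v = a
              · exact Or.inr ⟨hv, hu⟩
              · exact absurd (hc v hv) (htri a u v (hc u hu) h)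
          · rcases h with ⟨hu, hv⟩ | ⟨hv, hu⟩
            · exact hu ▸ hc v hv
            · exact (hv ▸ hc u hu).symm
        · refine ⟨b, fun u v => ⟨fun h => ?_, fun h => ?_⟩⟩
          · by_cases hu : u = b
            · exact Or.inl ⟨hu, fun hv => h.ne (hu.trans hv.symm)⟩
            · by_cases hv : v = b
              · exact Or.inr ⟨hv, hu⟩
              · exact absurd (hc v hv) (htri b u v (hc u hu) h)
          · rcases h with ⟨hu, hv⟩ | ⟨hv, hu⟩
            · exact hu ▸ hc v hv
            · exact (hv ▸ hc u hu).symm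
      obtain ⟨c, hc⟩ := key
      have : Nontrivial V := Fintype.one_lt_card_iff_nontrivial.mp (by omega)
      obtain ⟨w, hw⟩ := exists_ne c
      have : Nonempty {v : V // ¬ v = c} := ⟨⟨w, hw⟩⟩
      refine ⟨Fintype.card {v : V // ¬ v = c}, Fintype.card_pos, ?_⟩
      let e : V ≃ Fin 1 ⊕ Fin (Fintype.card {v : V // ¬ v = c}) :=
        (Equiv.sumCompl (· = c)).symm.trans
          (Equiv.sumCongr (Equiv.ofUnique _ _) (Fintype.equivFin _))
      refine ⟨⟨e, ?_⟩⟩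
      intro u v
      rw [hc u v]
      by_cases hu : u = c <;> by_cases hv : v = c <;>
        simp [e, Equiv.sumCompl_symm_apply_of_pos , Equiv.sumCompl_symm_apply_of_neg,
          hu, hv]
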